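/- If the jump kernel J is constant on each product B_i^k × B_j^k (i ≠ j) of balls of radius φ(k), then for any v ∈ D_0 (a finite linear combination of indicators of closed balls) and any function w on S that is constant on each ball B_i^k, the jump Dirichlet form satisfies 𝓔(w, v) = 𝓔(w, E^k Π^k v), where E^k Π^k v is the ball-wise average of v over the radius-φ(k) balls. -/

import Mathlib

open MeasureTheory

theorem dirichlet_form_ballwise_constant_projection
    {S : Type*} [MetricSpace S] [MeasurableSpace S] [BorelSpace S] (μ : Measure S)
    (hU : ∀ x y z : S, dist x z ≤ max (dist x y) (dist y z))
    {ι : Type*} [Countable ι]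
    (c : ι → S) (R : ℝ) (hR : 0 < R)
    (B : ι → Set S) (hB : ∀ i, B i = Metric.closedBall (c i) R)
    (hBd : Pairwise (Function.onFun Disjoint B))
    (hBu : (⋃ i, B i) = Set.univ)
    (hBμ : ∀ i, 0 < μ (B i) ∧ μ (B i) < ⊤)
    (J : S → S → ℝ)
    (hJm : Measurable (Function.uncurry J))
    (hJnn : ∀ x y, 0 ≤ J x y)
    (hJsym : ∀ x y, J x y = J y x)
    (C : ι → ι → ℝ)
    (hJconst : ∀ i j, i ≠ j → ∀ x ∈ B i, ∀ y ∈ B j, J x y = C i j)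
    -- v ∈ D₀ : finite linear combination of indicators of closed balls
    (v : S → ℝ)
    (hv : ∃ (n : ℕ) (a : Fin n → S) (ρs : Fin n → ℝ) (coef : Fin n → ℝ),
      (∀ l, 0 < ρs l) ∧
      v = fun x => ∑ l, coef l *
        (Metric.closedBall (a l) (ρs l)).indicator (fun _ => (1 : ℝ)) x)
    -- w constant on each ball B i
    (w : S → ℝ) (hw : ∀ i, ∀ x ∈ B i, ∀ x' ∈ B i, w x = w x')
    -- ball-wise average of v
    (Av : S → ℝ)
    (hAv : ∀ i, ∀ x ∈ B i, Av x = (μ (B i)).toReal⁻¹ * ∫ y in B i, v y ∂μ)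
    -- convergence of the relevant integrals
    (hint1 : Integrable (fun p : S × S =>
      (w p.1 - w p.2) * (v p.1 - v p.2) * J p.1 p.2) (μ.prod μ))
    (hint2 : Integrable (fun p : S × S =>
      (w p.1 - w p.2) * (Av p.1 - Av p.2) * J p.1 p.2) (μ.prod μ)) :
    (1 / 2) * ∫ p : S × S, (w p.1 - w p.2) * (v p.1 - v p.2) * J p.1 p.2 ∂(μ.prod μ)
      = (1 / 2) * ∫ p : S × S,
          (w p.1 - w p.2) * (Av p.1 - Av p.2) * J p.1 p.2 ∂(μ.prod μ) := by
  classical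
  congr 1
  haveI hsf : SigmaFinite μ := by
    apply Measure.sigmaFinite_of_countable (Set.countable_range B)
    · rintro s ⟨i, rfl⟩; exact (hBμ i).2
    · rw [Set.sUnion_range]; exact hBu
  obtain ⟨n, a, ρs, coef, hρ, hveq⟩ := hv
  have hvmeas : Measurable v := by
    rw [hveq]
    exact Finset.measurable_sum _ fun l _ =>
      (measurable_const.indicator Metric.isClosed_closedBall.measurableSet).const_mul _
  set M : ℝ := ∑ l, |coef l| with hM
  have hvbd : ∀ x, |v x| ≤ M := by
    intro x
    rw [hveq]
    calc |∑ l, coef l * (Metric.closedBall (a l) (ρs l)).indicator (fun _ => (1:ℝ)) x|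
        ≤ ∑ l, |coef l * (Metric.closedBall (a l) (ρs l)).indicator (fun _ => (1:ℝ)) x| :=
          Finset.abs_sum_le_sum_abs _ _
      _ ≤ ∑ l, |coef l| := Finset.sum_le_sum fun l _ => by
          rw [abs_mul]
          have : |(Metric.closedBall (a l) (ρs l)).indicator (fun _ => (1:ℝ)) x| ≤ 1 := by
            rw [Set.indicator_apply]
            split_ifs <;> norm_num
          calc |coef l| * |(Metric.closedBall (a l) (ρs l)).indicator (fun _ => (1:ℝ)) x|
              ≤ |coef l| * 1 := by
                exact mul_le_mul_of_nonneg_left this (abs_nonneg _)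
            _ = |coef l| := mul_one _
  have hBm : ∀ i, MeasurableSet (B i) := fun i => by
    rw [hB i]; exact Metric.isClosed_closedBall.measurableSet
  have hc : ∀ i, c i ∈ B i := fun i => by
    rw [hB i]; exact Metric.mem_closedBall_self hR.le
  set T : ι × ι → Set (S × S) := fun p => B p.1 ×ˢ B p.2 with hT
  have hTm : ∀ p, MeasurableSet (T p) := fun p => (hBm p.1).prod (hBm p.2)
  have hTd : Pairwise (Function.onFun Disjoint T) := by
    rintro ⟨i, j⟩ ⟨i', j'⟩ hne
    simp only [Function.onFun, hT]
    rw [Set.disjoint_left]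
    rintro ⟨x, y⟩ ⟨hx, hy⟩ ⟨hx', hy'⟩
    rcases eq_or_ne i i' with h | h
    · subst h
      have hjj : j ≠ j' := fun h => hne (by rw [h])
      exact Set.disjoint_left.1 (hBd hjj) hy hy'
    · exact Set.disjoint_left.1 (hBd h) hx hx'
  have hTu : ⋃ p, T p = Set.univ := by
    ext ⟨x, y⟩
    simp only [Set.mem_iUnion, Set.mem_univ, iff_true, hT, Set.mem_prod]
    have hx : x ∈ ⋃ i, B i := hBu ▸ Set.mem_univ x
    have hy : y ∈ ⋃ i, B i := hBu ▸ Set.mem_univ y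
    obtain ⟨i, hi⟩ := Set.mem_iUnion.1 hx
    obtain ⟨j, hj⟩ := Set.mem_iUnion.1 hy
    exact ⟨(i, j), hi, hj⟩
  have key : ∀ p : ι × ι,
      (∫ q in T p, (w q.1 - w q.2) * (v q.1 - v q.2) * J q.1 q.2 ∂(μ.prod μ))
        = ∫ q in T p, (w q.1 - w q.2) * (Av q.1 - Av q.2) * J q.1 q.2 ∂(μ.prod μ) := by
    rintro ⟨i, j⟩
    rcases eq_or_ne i j with rfl | hij
    · have h1 : Set.EqOn (fun q : S × S => (w q.1 - w q.2) * (v q.1 - v q.2) * J q.1 q.2)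
          (fun _ => (0:ℝ)) (T (i, i)) := by
        rintro ⟨x, y⟩ ⟨hx, hy⟩
        simp only
        rw [hw i x hx y hy]; ring
      have h2 : Set.EqOn (fun q : S × S => (w q.1 - w q.2) * (Av q.1 - Av q.2) * J q.1 q.2)
          (fun _ => (0:ℝ)) (T (i, i)) := by
        rintro ⟨x, y⟩ ⟨hx, hy⟩
        simp only
        rw [hw i x hx y hy]; ring
      rw [setIntegral_congr_fun (hTm (i, i)) h1, setIntegral_congr_fun (hTm (i, i)) h2]
    · set bi : ℝ := (μ (B i)).toReal with hbi_def
      set bj : ℝ := (μ (B j)).toReal with hbj_def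
      have hbi : 0 < bi := ENNReal.toReal_pos (hBμ i).1.ne' (hBμ i).2.ne
      have hbj : 0 < bj := ENNReal.toReal_pos (hBμ j).1.ne' (hBμ j).2.ne
      set Ii : ℝ := ∫ y in B i, v y ∂μ with hIi
      set Ij : ℝ := ∫ y in B j, v y ∂μ with hIj
      haveI hfin_i : IsFiniteMeasure (μ.restrict (B i)) :=
        ⟨by rw [Measure.restrict_apply_univ]; exact (hBμ i).2⟩
      haveI hfin_j : IsFiniteMeasure (μ.restrict (B j)) :=
        ⟨by rw [Measure.restrict_apply_univ]; exact (hBμ j).2⟩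
      have hR2 : (∫ q in T (i, j), (w q.1 - w q.2) * (Av q.1 - Av q.2) * J q.1 q.2 ∂(μ.prod μ))
          = (bi * bj) * ((w (c i) - w (c j)) * (bi⁻¹ * Ii - bj⁻¹ * Ij) * C i j) := by
        have hcong : Set.EqOn
            (fun q : S × S => (w q.1 - w q.2) * (Av q.1 - Av q.2) * J q.1 q.2)
            (fun _ => (w (c i) - w (c j)) * (bi⁻¹ * Ii - bj⁻¹ * Ij) * C i j) (T (i, j)) := by
          rintro ⟨x, y⟩ ⟨hx, hy⟩
          simp only
          rw [hw i x hx _ (hc i), hw j y hy _ (hc j), hAv i x hx, hAv j y hy,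
            hJconst i j hij x hx y hy]
        rw [setIntegral_congr_fun (hTm (i, j)) hcong, setIntegral_const]
        have : (μ.prod μ) (T (i, j)) = μ (B i) * μ (B j) := Measure.prod_prod _ _
        rw [measureReal_def, this, ENNReal.toReal_mul, smul_eq_mul]
      have hintv1 : Integrable (fun q : S × S => v q.1)
          ((μ.restrict (B i)).prod (μ.restrict (B j))) := by
        refine Integrable.mono' (integrable_const M)
          ((hvmeas.comp measurable_fst).aestronglyMeasurable) ?_
        exact Filter.Eventually.of_forall fun q => by simpa using hvbd q.1
      have hintv2 : Integrable (fun q : S × S => v q.2)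
          ((μ.restrict (B i)).prod (μ.restrict (B j))) := by
        refine Integrable.mono' (integrable_const M)
          ((hvmeas.comp measurable_snd).aestronglyMeasurable) ?_
        exact Filter.Eventually.of_forall fun q => by simpa using hvbd q.2
      have hL : (∫ q in T (i, j), (w q.1 - w q.2) * (v q.1 - v q.2) * J q.1 q.2 ∂(μ.prod μ))
          = ((w (c i) - w (c j)) * C i j) * (bj * Ii - bi * Ij) := by
        have hcong : Set.EqOn
            (fun q : S × S => (w q.1 - w q.2) * (v q.1 - v q.2) * J q.1 q.2)
            (fun q : S × S => ((w (c i) - w (c j)) * C i j) * (v q.1 - v q.2)) (T (i, j)) := by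
          rintro ⟨x, y⟩ ⟨hx, hy⟩
          simp only
          rw [hw i x hx _ (hc i), hw j y hy _ (hc j), hJconst i j hij x hx y hy]
          ring
        rw [setIntegral_congr_fun (hTm (i, j)) hcong]
        have hTij : T (i, j) = B i ×ˢ B j := rfl
        rw [hTij, ← Measure.prod_restrict, integral_const_mul]
        congr 1
        rw [integral_sub hintv1 hintv2]
        have e1 : (∫ q : S × S, v q.1 ∂((μ.restrict (B i)).prod (μ.restrict (B j)))) = bj * Ii := by
          rw [integral_prod _ hintv1]
          simp only [integral_const, measureReal_def, Measure.restrict_apply_univ, smul_eq_mul]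
          rw [integral_const_mul]
        have e2 : (∫ q : S × S, v q.2 ∂((μ.restrict (B i)).prod (μ.restrict (B j)))) = bi * Ij := by
          rw [integral_prod _ hintv2]
          simp only [integral_const, measureReal_def, Measure.restrict_apply_univ, smul_eq_mul]
          rfl
        rw [e1, e2]
      rw [hL, hR2]
      field_simp
  calc (∫ p : S × S, (w p.1 - w p.2) * (v p.1 - v p.2) * J p.1 p.2 ∂(μ.prod μ))
      = ∫ p in ⋃ q, T q, (w p.1 - w p.2) * (v p.1 - v p.2) * J p.1 p.2 ∂(μ.prod μ) := by
        rw [hTu, setIntegral_univ]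
    _ = ∑' q, ∫ p in T q, (w p.1 - w p.2) * (v p.1 - v p.2) * J p.1 p.2 ∂(μ.prod μ) :=
        integral_iUnion hTm hTd hint1.integrableOn
    _ = ∑' q, ∫ p in T q, (w p.1 - w p.2) * (Av p.1 - Av p.2) * J p.1 p.2 ∂(μ.prod μ) :=
        tsum_congr key
    _ = ∫ p in ⋃ q, T q, (w p.1 - w p.2) * (Av p.1 - Av p.2) * J p.1 p.2 ∂(μ.prod μ) :=
        (integral_iUnion hTm hTd hint2.integrableOn).symm
    _ = ∫ p : S × S, (w p.1 - w p.2) * (Av p.1 - Av p.2) * J p.1 p.2 ∂(μ.prod μ) := by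
        rw [hTu, setIntegral_univ]
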